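/- The min-max isotonic regression formula yields a monotone function: if for data points x₁ ⪯ x₂ ⪯ … ⪯ xₙ (totally ordered) with weights wᵢ > 0 and values yᵢ we define ĝ(xᵢ) = min over l ≥ i of (max over u ≤ i of Avg(u→l)), where Avg(u→l) = (Σ_{j=u}^{l} wⱼyⱼ)/(Σ_{j=u}^{l} wⱼ), then i ≤ j implies ĝ(xᵢ) ≤ ĝ(xⱼ). -/

import Mathlib

/-- The min-max isotonic regression formula yields a monotone function: with
`ĝ(i) = min_{l ≥ i} max_{u ≤ i} Avg(u→l)` for weighted averages over index
intervals, `i ≤ j` implies `ĝ(i) ≤ ĝ(j)`. -/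
theorem stmt5 (n : ℕ) (w y : Fin n → ℝ) (hw : ∀ i, 0 < w i)
    (Avg : Fin n → Fin n → ℝ)
    (hAvg : ∀ u l, Avg u l =
      (∑ j ∈ Finset.Icc u l, w j * y j) / (∑ j ∈ Finset.Icc u l, w j))
    (g : Fin n → ℝ)
    (hg : ∀ i, g i =
      (Finset.Ici i).inf' ⟨i, Finset.mem_Ici.2 le_rfl⟩ (fun l =>
        (Finset.Iic i).sup' ⟨i, Finset.mem_Iic.2 le_rfl⟩ (fun u => Avg u l))) :
    ∀ i j : Fin n, i ≤ j → g i ≤ g j := by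
  intro i j hij
  rw [hg i, hg j]
  apply Finset.le_inf'
  intro l hl
  have hl' : l ∈ Finset.Ici i := Finset.mem_Ici.2 (le_trans hij (Finset.mem_Ici.1 hl))
  refine le_trans (Finset.inf'_le _ hl') ?_
  apply Finset.sup'_le
  intro u hu
  exact Finset.le_sup' (fun u => Avg u l) (Finset.mem_Iic.2 (le_trans (Finset.mem_Iic.1 hu) hij))
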